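/- arXiv:2206.08628 — 2 statements merged into one kernel-verified Lean document; each statement's English description precedes it below -/
import Mathlib

section
/- Let a, b be nonnegative integers with a even, a' = a/2, and suppose 2b ≥ a. Set Σ = b + a' and δ = b - a'. Then the partition λ = (1,5,…,4Σ+1) ∪ (3,7,…,4δ-1) has transpose λᵗ = (2b+1, 2b, 2b, 2b-1, 2b-1, …, a+1, a+1, a, a, a, a, a-1, a-1, a-1, a-1, …, 1, 1, 1, 1), i.e. the part 2b+1 occurs once, each integer from a+1 to 2b occurs twice, and each integer from 1 to a occurs four times. -/
/-- The `i`-th part (1-indexed) of the transpose of a partition given as a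
multiset of parts: the number of parts that are `≥ i`. -/
def tc (l : Multiset ℕ) (i : ℕ) : ℕ := Multiset.card (l.filter (fun p => i ≤ p))

/-- The partition `(2, 4, …, 2k)` as a multiset of parts. -/
def evens2 (k : ℕ) : Multiset ℕ := (Multiset.range k).map (fun j => 2 * (j + 1))

/-- The partition `(1, 3, …, 2k-1)` as a multiset of parts. -/
def odds (k : ℕ) : Multiset ℕ := (Multiset.range k).map (fun j => 2 * j + 1)

/-- The transpose of a partition, as a multiset of (positive) parts. -/
def transposeM (l : Multiset ℕ) : Multiset ℕ :=
  ((Multiset.range l.sum).map (fun i => tc l (i + 1))).filter (fun v => 0 < v)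

/-- The multiset `{1, 2, …, k}`. -/
def ints1 (k : ℕ) : Multiset ℕ := (Multiset.range k).map (· + 1)

/-- The multiset `{l+1, l+2, …, l+k}`. -/
def intsAbove (l k : ℕ) : Multiset ℕ := (Multiset.range k).map (fun j => l + 1 + j)

/-- The multiset of odd numbers `{2l+1, 2l+3, …, 2(l+k)-1}`. -/
def oddsAbove (l k : ℕ) : Multiset ℕ := (Multiset.range k).map (fun j => 2 * (l + j) + 1)

/-- Sum of the `k` largest parts. -/
def topSum (l : Multiset ℕ) (k : ℕ) : ℕ := ((l.sort (· ≥ ·)).take k).sum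

/-- `x` dominates `y`: every partial sum of the largest parts of `y` is at most the
corresponding partial sum for `x`. -/
def Dominates (x y : Multiset ℕ) : Prop := ∀ k, topSum y k ≤ topSum x k

/-- `mu` is the B-collapse of `t`: the unique largest partition with the same sum as `t`,
dominated by `t`, in which every even part has even multiplicity. -/
def IsBCollapse (t mu : Multiset ℕ) : Prop :=
  mu.sum = t.sum ∧ (∀ k, Even k → Even (mu.count k)) ∧ Dominates t mu ∧
    ∀ nu : Multiset ℕ, nu.sum = t.sum → (∀ k, Even k → Even (nu.count k)) →
      Dominates t nu → Dominates mu nu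

-- card of {j < n : c ≤ j}
lemma card_filter_ge (n c : ℕ) :
    Multiset.card ((Multiset.range n).filter (fun j => c ≤ j)) = n - c := by
  induction n with
  | zero => simp
  | succ n ih =>
    rw [Multiset.range_succ, Multiset.filter_cons, Multiset.card_add, ih]
    by_cases h : c ≤ n
    · simp [h]; omega
    · simp [h]; omega

lemma tc_eval (S D i : ℕ) :
    tc ((Multiset.range (S+1)).map (fun j => 4*j+1) +
        (Multiset.range D).map (fun j => 4*j+3)) (i+1)
      = (S + 1 - (i+3)/4) + (D - (i+1)/4) := by
  unfold tc
  rw [Multiset.filter_add, Multiset.card_add,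
    ← Multiset.countP_eq_card_filter, ← Multiset.countP_eq_card_filter,
    Multiset.countP_map, Multiset.countP_map]
  have h1 : ((Multiset.range (S+1)).filter fun j => i + 1 ≤ 4*j+1)
      = (Multiset.range (S+1)).filter (fun j => (i+3)/4 ≤ j) := by
    apply Multiset.filter_congr; intro j _; constructor <;> (intro; omega)
  have h2 : ((Multiset.range D).filter fun j => i + 1 ≤ 4*j+3)
      = (Multiset.range D).filter (fun j => (i+1)/4 ≤ j) := by
    apply Multiset.filter_congr; intro j _; constructor <;> (intro; omega)
  rw [h1, h2, card_filter_ge, card_filter_ge]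

lemma ints1_succ (n : ℕ) : ints1 (n+1) = (n+1) ::ₘ ints1 n := by
  unfold ints1; rw [Multiset.range_succ, Multiset.map_cons]

lemma quads (n : ℕ) : (Multiset.range (4*n)).map (fun j => n - j/4)
    = ints1 n + ints1 n + ints1 n + ints1 n := by
  induction n with
  | zero => simp [ints1]
  | succ n ih =>
    rw [show 4*(n+1) = 4 + 4*n from by ring, Multiset.range_add, Multiset.map_add,
      Multiset.map_map]
    have ht : (Multiset.range (4*n)).map ((fun j => (n+1) - j/4) ∘ (4 + ·))
        = (Multiset.range (4*n)).map (fun j => n - j/4) :=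
      Multiset.map_congr rfl (fun j _ => by simp only [Function.comp]; omega)
    rw [ht, ih]
    have hr4 : (Multiset.range 4 : Multiset ℕ) = {0, 1, 2, 3} := by decide
    rw [hr4]
    simp only [Multiset.insert_eq_cons, Multiset.map_cons, Multiset.map_singleton,
      ints1_succ]
    simp only [← Multiset.singleton_add]
    norm_num

lemma pairs : ∀ (d s : ℕ), d ≤ s →
    (Multiset.range (4*d)).map (fun j => (s - j/4) + (d - (j+2)/4))
      = intsAbove (s-d) (2*d) + intsAbove (s-d) (2*d) := by
  intro d
  induction d with
  | zero => intro s _; simp [intsAbove]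
  | succ d ih =>
    intro s hs
    rw [show 4*(d+1) = 4 + 4*d from by ring, Multiset.range_add, Multiset.map_add,
      Multiset.map_map]
    have ht : (Multiset.range (4*d)).map ((fun j => (s - j/4) + (d+1 - (j+2)/4)) ∘ (4 + ·))
        = (Multiset.range (4*d)).map (fun j => ((s-1) - j/4) + (d - (j+2)/4)) :=
      Multiset.map_congr rfl (fun j _ => by simp only [Function.comp]; omega)
    rw [ht, ih (s-1) (by omega)]
    have hr4 : (Multiset.range 4 : Multiset ℕ) = {0, 1, 2, 3} := by decide
    rw [hr4]
    have htop : intsAbove (s-(d+1)) (2*(d+1)) =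
        intsAbove (s-(d+1)) (2*d) + ({s+d, s+d+1} : Multiset ℕ) := by
      unfold intsAbove
      rw [show 2*(d+1) = 2*d + 2 from by ring, Multiset.range_add, Multiset.map_add,
        Multiset.map_map]
      congr 1
      have : (Multiset.range 2 : Multiset ℕ) = {0, 1} := by decide
      rw [this]
      simp only [Multiset.insert_eq_cons, Multiset.map_cons, Multiset.map_singleton,
        Function.comp]
      have h0 : s - (d+1) + 1 + (2*d + 0) = s + d := by omega
      have h1 : s - (d+1) + 1 + (2*d + 1) = s + d + 1 := by omega
      rw [h0, h1]
    have hsd : s - 1 - d = s - (d+1) := by omega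
    rw [hsd, htop]
    simp only [Multiset.insert_eq_cons, Multiset.map_cons, Multiset.map_singleton]
    ext x
    simp only [Multiset.count_add, Multiset.count_cons, Multiset.count_singleton]
    generalize Multiset.count x (intsAbove (s - (d+1)) (2*d)) = m
    split_ifs <;> omega

/-- For `a` even with `2b ≥ a`, `a' = a/2`, `Σ = b + a'`, `δ = b - a'`, the transpose of
`λ = (1,5,…,4Σ+1) ∪ (3,7,…,4δ-1)` has the part `2b+1` once, each integer from `a+1`
to `2b` twice, and each integer from `1` to `a` four times. -/
theorem stmt12 (a b : ℕ) (ha : Even a) (h : a ≤ 2 * b) (lam : Multiset ℕ)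
    (hlam : lam = (Multiset.range (b + a / 2 + 1)).map (fun j => 4 * j + 1) +
                  (Multiset.range (b - a / 2)).map (fun j => 4 * j + 3)) :
    transposeM lam = (2 * b + 1) ::ₘ
      (intsAbove a (2 * b - a) + intsAbove a (2 * b - a) +
        (ints1 a + ints1 a + ints1 a + ints1 a)) := by
  obtain ⟨c, rfl⟩ := ha
  have hc2 : (c + c) / 2 = c := by omega
  have hcb : c ≤ b := by omega
  rw [hc2] at hlam
  -- the column-count function
  have hfun : ∀ i, tc lam (i + 1) = (b + c + 1 - (i+3)/4) + ((b - c) - (i+1)/4) := by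
    intro i
    rw [hlam]
    exact tc_eval (b + c) (b - c) i
  -- lower bound on the sum
  have hS : 4 * (b + c) + 1 ≤ lam.sum := by
    rw [hlam, Multiset.sum_add]
    have : 4 * (b + c) + 1 ≤ ((Multiset.range (b + c + 1)).map (fun j => 4 * j + 1)).sum := by
      have hmem : (4 * (b + c) + 1) ∈ (Multiset.range (b + c + 1)).map (fun j => 4 * j + 1) :=
        Multiset.mem_map.2 ⟨b + c, by simp [Multiset.mem_range], rfl⟩
      exact Multiset.le_sum_of_mem hmem  -- may not exist; check
    omega
  obtain ⟨R, hR⟩ : ∃ R, lam.sum = (4 * (b + c) + 1) + R := ⟨_, (Nat.add_sub_cancel' hS).symm⟩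
  unfold transposeM
  rw [Multiset.map_congr rfl (fun i _ => hfun i), hR, Multiset.range_add, Multiset.map_add,
    Multiset.filter_add, Multiset.map_map]
  have htail : (((Multiset.range R).map ((fun i => (b + c + 1 - (i+3)/4) + ((b - c) - (i+1)/4)) ∘
      ((4 * (b + c) + 1) + ·))).filter (fun v => 0 < v)) = 0 := by
    rw [Multiset.filter_eq_nil]
    intro v hv
    obtain ⟨j, _, rfl⟩ := Multiset.mem_map.1 hv
    simp only [Function.comp]
    omega
  have hhead : (((Multiset.range (4 * (b + c) + 1)).map
      (fun i => (b + c + 1 - (i+3)/4) + ((b - c) - (i+1)/4))).filter (fun v => 0 < v)) =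
      ((Multiset.range (4 * (b + c) + 1)).map
      (fun i => (b + c + 1 - (i+3)/4) + ((b - c) - (i+1)/4))) := by
    rw [Multiset.filter_eq_self]
    intro v hv
    obtain ⟨j, hj, rfl⟩ := Multiset.mem_map.1 hv
    rw [Multiset.mem_range] at hj
    omega
  rw [htail, hhead, add_zero]
  -- split the range
  rw [show 4 * (b + c) + 1 = (1 + 4 * (b - c)) + 4 * (c + c) from by omega,
    Multiset.range_add, Multiset.range_add, Multiset.map_add, Multiset.map_add,
    Multiset.map_map, Multiset.map_map]
  have hfirst : (Multiset.range 1).map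
      (fun i => (b + c + 1 - (i+3)/4) + ((b - c) - (i+1)/4)) = {2 * b + 1} := by
    have : (Multiset.range 1 : Multiset ℕ) = {0} := by decide
    rw [this, Multiset.map_singleton]
    congr 1
    omega
  have hmid : (Multiset.range (4 * (b - c))).map
      ((fun i => (b + c + 1 - (i+3)/4) + ((b - c) - (i+1)/4)) ∘ (1 + ·)) =
      intsAbove (c + c) (2 * b - (c + c)) + intsAbove (c + c) (2 * b - (c + c)) := by
    have step : (Multiset.range (4 * (b - c))).map
        ((fun i => (b + c + 1 - (i+3)/4) + ((b - c) - (i+1)/4)) ∘ (1 + ·)) =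
        (Multiset.range (4 * (b - c))).map
        (fun j => ((b + c) - j/4) + ((b - c) - (j+2)/4)) :=
      Multiset.map_congr rfl (fun j _ => by simp only [Function.comp]; omega)
    rw [step, pairs (b - c) (b + c) (by omega)]
    have h1 : b + c - (b - c) = c + c := by omega
    have h2 : 2 * (b - c) = 2 * b - (c + c) := by omega
    rw [h1, h2]
  have htl : (Multiset.range (4 * (c + c))).map
      ((fun i => (b + c + 1 - (i+3)/4) + ((b - c) - (i+1)/4)) ∘ ((1 + 4 * (b - c)) + ·)) =
      ints1 (c + c) + ints1 (c + c) + ints1 (c + c) + ints1 (c + c) := by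
    have step : (Multiset.range (4 * (c + c))).map
        ((fun i => (b + c + 1 - (i+3)/4) + ((b - c) - (i+1)/4)) ∘ ((1 + 4 * (b - c)) + ·)) =
        (Multiset.range (4 * (c + c))).map (fun j => (c + c) - j/4) :=
      Multiset.map_congr rfl (fun j _ => by simp only [Function.comp]; omega)
    rw [step, quads]
  rw [hfirst, hmid, htl, add_assoc, Multiset.singleton_add]
end

section
/- Let a ≥ b ≥ 0 be integers with δ = a - b and Σ = a + b. Then the partwise sum of the partitions (δ, δ-1, δ-1, δ-2, δ-2, …, 1, 1) and (Σ+1, Σ, Σ, Σ-1, Σ-1, …, 1, 1) equals the partition (2a+1, 2a-1, 2a-1, 2a-3, 2a-3, …, 2b+1, 2b+1, 2b, 2b, 2b-1, 2b-1, …, 1, 1). -/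
lemma shiftmap (n : ℕ) (f : ℕ → ℕ) :
    (Multiset.range (n+1)).map f = f 0 ::ₘ (Multiset.range n).map (fun j => f (j + 1)) := by
  have : Multiset.range (n+1) = (0 : ℕ) ::ₘ (Multiset.range n).map (· + 1) := by
    rw [Multiset.range, List.range_succ_eq_map]
    rfl
  rw [this, Multiset.map_cons, Multiset.map_map]
  rfl

lemma revmap (n : ℕ) (f : ℕ → ℕ) :
    (Multiset.range n).map f = (Multiset.range n).map (fun j => f (n - 1 - j)) := by
  induction n generalizing f with
  | zero => simp
  | succ n ih =>
    have h1 : (Multiset.range (n+1)).map (fun j => f (n + 1 - 1 - j)) =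
        (Multiset.range (n+1)).map (fun j => f (n - j)) := by
      apply Multiset.map_congr rfl
      intro j hj; simp [Multiset.mem_range] at hj; congr 1 <;> omega
    rw [h1, shiftmap n (fun j => f (n - j)), ih (fun j => f (n - (j + 1)))]
    have h2 : (Multiset.range n).map (fun j => f (n - (n - 1 - j + 1))) =
        (Multiset.range n).map f := by
      apply Multiset.map_congr rfl
      intro j hj; simp [Multiset.mem_range] at hj; congr 1 <;> omega
    rw [h2, Nat.sub_zero, Multiset.range_succ, Multiset.map_cons]

lemma pairmap (m : ℕ) (g : ℕ → ℕ) :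
    (Multiset.range (2 * m + 1)).map (fun j => g ((j + 1) / 2)) =
      g 0 ::ₘ ((Multiset.range m).map (fun q => g (q + 1)) +
        (Multiset.range m).map (fun q => g (q + 1))) := by
  induction m with
  | zero => simp
  | succ m ih =>
    have h : 2 * (m + 1) + 1 = (2 * m + 1) + 1 + 1 := by ring
    rw [h, Multiset.range_succ, Multiset.map_cons, Multiset.range_succ, Multiset.map_cons, ih,
      Multiset.range_succ, Multiset.map_cons]
    have e1 : (2 * m + 1 + 1 + 1) / 2 = m + 1 := by omega
    have e2 : (2 * m + 1 + 1) / 2 = m + 1 := by omega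
    rw [e1, e2]
    simp only [← Multiset.singleton_add]
    abel

/-- For `a ≥ b`, `δ = a - b`, `Σ = a + b`, the partwise sum of
`(δ, δ-1, δ-1, …, 1, 1)` and `(Σ+1, Σ, Σ, …, 1, 1)` (whose `i`-th parts are
`δ - i/2` and `Σ + 1 - i/2`) is the partition
`(2a+1, 2a-1, 2a-1, …, 2b+1, 2b+1, 2b, 2b, 2b-1, 2b-1, …, 1, 1)`. -/
theorem stmt17 (a b : ℕ) (hab : b ≤ a) :
    (Multiset.range (2 * (a + b) + 1)).map
        (fun j => ((a - b) - (j + 1) / 2) + ((a + b + 1) - (j + 1) / 2)) =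
      (2 * a + 1) ::ₘ
        (oddsAbove b (a - b) + oddsAbove b (a - b) +
          (ints1 (2 * b) + ints1 (2 * b))) := by
  have hp := pairmap (a + b) (fun q => ((a - b) - q) + ((a + b + 1) - q))
  beta_reduce at hp
  rw [hp]
  have hS : (Multiset.range (a + b)).map
      (fun q => ((a - b) - (q + 1)) + ((a + b + 1) - (q + 1))) =
      oddsAbove b (a - b) + ints1 (2 * b) := by
    rw [show a + b = (a - b) + 2 * b by omega, Multiset.range_add, Multiset.map_add,
      Multiset.map_map]
    congr 1
    · rw [revmap (a - b) (fun q => ((a - b) - (q + 1)) + ((a - b) + 2 * b + 1 - (q + 1)))]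
      apply Multiset.map_congr rfl
      intro j hj
      simp only [Multiset.mem_range] at hj
      show _ = 2 * (b + j) + 1
      omega
    · rw [revmap (2 * b) ((fun q => ((a - b) - (q + 1)) + ((a - b) + 2 * b + 1 - (q + 1))) ∘ fun x => a - b + x)]
      apply Multiset.map_congr rfl
      intro j hj
      simp only [Multiset.mem_range] at hj
      simp only [Function.comp_apply]
      show _ = j + 1
      omega
  rw [hS]
  congr 1
  · omega
  · unfold oddsAbove ints1
    abel
end
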